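/- A finite poset P is a unit interval order (admits an interval representation in which every interval is closed of length 1) if and only if P contains no subposet isomorphic to 2+2 and no subposet isomorphic to 1+3. -/

import Mathlib

/-- Two elements are incomparable in a poset. -/
def Incomp {α : Type*} [PartialOrder α] (x y : α) : Prop := ¬ x ≤ y ∧ ¬ y ≤ x

/-- The poset contains a subposet isomorphic to 2+2 (two disjoint 2-chains). -/
def HasTwoPlusTwo (α : Type*) [PartialOrder α] : Prop :=
  ∃ a₁ b₁ a₂ b₂ : α, a₁ < b₁ ∧ a₂ < b₂ ∧
    Incomp a₁ a₂ ∧ Incomp a₁ b₂ ∧ Incomp b₁ a₂ ∧ Incomp b₁ b₂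

/-- The poset contains a subposet isomorphic to 1+3 (a point plus a 3-chain). -/
def HasOnePlusThree (α : Type*) [PartialOrder α] : Prop :=
  ∃ a b d c : α, a < b ∧ b < d ∧ Incomp c a ∧ Incomp c b ∧ Incomp c d

open Classical

/-! ### An abstract recursively defined labeling -/

noncomputable def uioL (Q : ℕ → ℕ → Prop) : ℕ → ℝ
  | 0 => 0
  | (j+1) => ((Finset.range (j+1)).attach.sup'
      (by simp)
      (fun i => if Q i.1 (j+1) then uioL Q i.1 + 1 else uioL Q j)) + (4:ℝ)⁻¹ ^ (j+1)
decreasing_by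
  · exact Finset.mem_range.mp i.2
  · exact Nat.lt_succ_self j

section Abstract

variable {Q : ℕ → ℕ → Prop}

lemma uioL_succ (j : ℕ) :
    uioL Q (j+1) = ((Finset.range (j+1)).attach.sup'
      (by simp)
      (fun i => if Q i.1 (j+1) then uioL Q i.1 + 1 else uioL Q j)) + (4:ℝ)⁻¹ ^ (j+1) := by
  rw [uioL]

lemma uioL_mono_succ (j : ℕ) : uioL Q j + (4:ℝ)⁻¹ ^ (j+1) ≤ uioL Q (j+1) := by
  rw [uioL_succ]
  have hm : (⟨j, by simp⟩ : {x // x ∈ Finset.range (j+1)}) ∈ (Finset.range (j+1)).attach :=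
    Finset.mem_attach _ _
  have h2 := Finset.le_sup' (fun i : {x // x ∈ Finset.range (j+1)} =>
      if Q i.1 (j+1) then uioL Q i.1 + 1 else uioL Q j) hm
  simp only at h2
  by_cases h : Q j (j+1)
  · rw [if_pos h] at h2; linarith
  · rw [if_neg h] at h2; linarith

lemma uioL_mono {i j : ℕ} (h : i ≤ j) : uioL Q i ≤ uioL Q j := by
  have : Monotone (uioL Q) := by
    apply monotone_nat_of_le_succ
    intro n
    have := uioL_mono_succ (Q := Q) n
    have h4 : (0:ℝ) < (4:ℝ)⁻¹ ^ (n+1) := by positivity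
    linarith
  exact this h

lemma uioL_mono_lt {i j : ℕ} (h : i < j) : uioL Q i + (4:ℝ)⁻¹ ^ j ≤ uioL Q j := by
  have h1 := uioL_mono_succ (Q := Q) i
  have h2 : uioL Q (i+1) ≤ uioL Q j := uioL_mono h
  have h3 : (4:ℝ)⁻¹ ^ j ≤ (4:ℝ)⁻¹ ^ (i+1) := by
    apply pow_le_pow_of_le_one (by norm_num) (by norm_num) h
  linarith

lemma uioL_lower {i j : ℕ} (hij : i < j) (hQ : Q i j) : uioL Q i + 1 < uioL Q j := by
  obtain ⟨k, rfl⟩ : ∃ k, j = k + 1 := ⟨j - 1, by omega⟩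
  rw [uioL_succ]
  have hm : (⟨i, by simpa using hij⟩ : {x // x ∈ Finset.range (k+1)}) ∈
      (Finset.range (k+1)).attach := Finset.mem_attach _ _
  have h2 := Finset.le_sup' (fun i : {x // x ∈ Finset.range (k+1)} =>
      if Q i.1 (k+1) then uioL Q i.1 + 1 else uioL Q k) hm
  simp only at h2
  rw [if_pos hQ] at h2
  have h4 : (0:ℝ) < (4:ℝ)⁻¹ ^ (k+1) := by positivity
  linarith

lemma uioL_invariant (R : ℕ → Prop)
    (hyp3 : ∀ i i' j, Q i j → i' ≤ i → R i' → Q i' j) :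
    ∀ j i', R i' → i' ≤ j → (∀ j'', j'' ≤ j → ¬ Q i' j'') →
      uioL Q j ≤ uioL Q i' + 1 - (4:ℝ)⁻¹ ^ j / 3 := by
  intro j
  induction j with
  | zero =>
    intro i' _ hle _
    interval_cases i'
    rw [show uioL Q 0 = 0 from by rw [uioL]]
    norm_num
  | succ n ih =>
    intro i' hR hle hnoQ
    rcases Nat.lt_succ_iff_lt_or_eq.mp (Nat.lt_succ_of_le hle) with h' | h'
    · have hle' : i' ≤ n := Nat.lt_succ_iff.mp h'
      rw [uioL_succ]
      have key : ((Finset.range (n+1)).attach.sup'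
          (by simp)
          (fun i => if Q i.1 (n+1) then uioL Q i.1 + 1 else uioL Q n)) ≤
          uioL Q i' + 1 - (4:ℝ)⁻¹ ^ n / 3 := by
        apply Finset.sup'_le
        intro i _
        by_cases hQ : Q i.1 (n+1)
        · rw [if_pos hQ]
          have hlt : i.1 < i' := by
            by_contra hc
            exact hnoQ (n+1) le_rfl (hyp3 i.1 i' (n+1) hQ (by omega) hR)
          have h1 := uioL_mono_lt (Q := Q) hlt
          have h2 : (4:ℝ)⁻¹ ^ n ≤ (4:ℝ)⁻¹ ^ i' :=
            pow_le_pow_of_le_one (by norm_num) (by norm_num) hle'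
          have h3 : (0:ℝ) < (4:ℝ)⁻¹ ^ n := by positivity
          linarith
        · rw [if_neg hQ]
          exact ih i' hR hle' (fun j'' hj => hnoQ j'' (by omega))
      have heq : (4:ℝ)⁻¹ ^ (n+1) = (4:ℝ)⁻¹ ^ n / 4 := by ring
      linarith
    · subst h'
      have h4 : (4:ℝ)⁻¹ ^ (n+1) ≤ 1 := by
        apply pow_le_one₀ <;> norm_num
      linarith

lemma uioL_upper (R : ℕ → Prop)
    (hyp2 : ∀ i j j', Q i j → j ≤ j' → R j' → Q i j')
    (hyp3 : ∀ i i' j, Q i j → i' ≤ i → R i' → Q i' j)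
    {i j : ℕ} (hRi : R i) (hRj : R j) (hnQ : ¬ Q i j) :
    uioL Q j ≤ uioL Q i + 1 := by
  rcases le_or_gt j i with h | h
  · have := uioL_mono (Q := Q) h; linarith
  · have hno : ∀ j'', j'' ≤ j → ¬ Q i j'' := by
      intro j'' hj'' hQ
      exact hnQ (hyp2 i j'' j hQ hj'' hRj)
    have := uioL_invariant R hyp3 j i hRi h.le hno
    have h3 : (0:ℝ) < (4:ℝ)⁻¹ ^ j := by positivity
    linarith

end Abstract

/-! ### The trace preorder and ranks -/

section UIO

variable {α : Type*} [PartialOrder α]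

/-- The trace preorder of a poset. -/
def UTrace (x y : α) : Prop := ∀ z, (z < x → z < y) ∧ (y < z → x < z)

lemma utrace_refl (x : α) : UTrace x x := fun _ => ⟨id, id⟩

lemma utrace_trans {x y z : α} (h1 : UTrace x y) (h2 : UTrace y z) : UTrace x z :=
  fun w => ⟨fun h => (h2 w).1 ((h1 w).1 h), fun h => (h1 w).2 ((h2 w).2 h)⟩

lemma utrace_of_lt {x y : α} (h : x < y) : UTrace x y :=
  fun z => ⟨fun hz => hz.trans h, fun hz => h.trans hz⟩

lemma not_utrace_of_lt {x y : α} (h : x < y) : ¬ UTrace y x :=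
  fun ht => lt_irrefl x ((ht x).1 h)

lemma not_utrace_iff {x y : α} :
    ¬ UTrace x y ↔ ∃ z, (z < x ∧ ¬ z < y) ∨ (y < z ∧ ¬ x < z) := by
  unfold UTrace
  push_neg
  constructor
  · rintro ⟨z, hz⟩; exact ⟨z, by tauto⟩
  · rintro ⟨z, hz⟩; exact ⟨z, by tauto⟩

lemma incomp_of {x y : α} (h1 : ¬ x < y) (h2 : ¬ y < x) (h3 : x ≠ y) : Incomp x y :=
  ⟨fun h => h.lt_or_eq.elim h1 h3, fun h => h.lt_or_eq.elim h2 (fun e => h3 e.symm)⟩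

lemma mk22 (hno : ¬ HasTwoPlusTwo α) {a b c d : α} (hab : a < b) (hcd : c < d)
    (h1 : ¬ a < c) (h2 : ¬ c < a) (h3 : ¬ a < d) (h4 : ¬ d < a)
    (h5 : ¬ b < c) (h6 : ¬ c < b) (h7 : ¬ b < d) (h8 : ¬ d < b) : False :=
  hno ⟨a, b, c, d, hab, hcd,
    incomp_of h1 h2 (by rintro rfl; exact h3 hcd),
    incomp_of h3 h4 (by rintro rfl; exact h2 hcd),
    incomp_of h5 h6 (by rintro rfl; exact h7 hcd),
    incomp_of h7 h8 (by rintro rfl; exact h3 hab)⟩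

lemma mk13 (hno : ¬ HasOnePlusThree α) {a b d c : α} (hab : a < b) (hbd : b < d)
    (h1 : ¬ c < a) (h2 : ¬ a < c) (h3 : ¬ c < b) (h4 : ¬ b < c)
    (h5 : ¬ c < d) (h6 : ¬ d < c) : False :=
  hno ⟨a, b, d, c, hab, hbd,
    incomp_of h1 h2 (by rintro rfl; exact h3 hab),
    incomp_of h3 h4 (by rintro rfl; exact h5 hbd),
    incomp_of h5 h6 (by rintro rfl; exact h4 hbd)⟩

lemma utrace_total (hno2 : ¬ HasTwoPlusTwo α) (hno3 : ¬ HasOnePlusThree α) (x y : α) :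
    UTrace x y ∨ UTrace y x := by
  by_contra hc
  push_neg at hc
  obtain ⟨hxy, hyx⟩ := hc
  obtain ⟨a, hA⟩ := not_utrace_iff.mp hxy
  obtain ⟨b, hB⟩ := not_utrace_iff.mp hyx
  rcases hA with ⟨hax, hay⟩ | ⟨hya, hxa⟩ <;> rcases hB with ⟨hby, hbx⟩ | ⟨hxb, hyb⟩
  · -- a<x, ¬a<y, b<y, ¬b<x : 2+2 on (a,x),(b,y)
    exact mk22 hno2 hax hby
      (fun h => hay (h.trans hby)) (fun h => hbx (h.trans hax))
      hay (fun h => hbx ((hby.trans h).trans hax))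
      (fun h => hay (hax.trans (h.trans hby))) hbx
      (fun h => hay ((hax.trans h))) (fun h => hbx (hby.trans h))
  · -- a<x, ¬a<y, x<b, ¬y<b : 1+3 chain a<x<b, point y
    exact mk13 hno3 hax hxb
      (fun h => hyb ((h.trans hax).trans hxb)) hay
      (fun h => hyb (h.trans hxb)) (fun h => hay (hax.trans h))
      hyb (fun h => hay (hax.trans (hxb.trans h)))
  · -- y<a, ¬x<a, b<y, ¬b<x : 1+3 chain b<y<a, point x
    exact mk13 hno3 hby hya
      (fun h => hxa (h.trans (hby.trans hya))) hbx
      (fun h => hxa (h.trans hya)) (fun h => hbx (hby.trans h))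
      hxa (fun h => hbx ((hby.trans hya).trans h))
  · -- y<a, ¬x<a, x<b, ¬y<b : 2+2 on (y,a),(x,b)
    exact mk22 hno2 hya hxb
      (fun h => hyb (h.trans hxb)) (fun h => hxa (h.trans hya))
      hyb (fun h => hxa ((hxb.trans h).trans hya))
      (fun h => hyb ((hya.trans h).trans hxb)) hxa
      (fun h => hyb (hya.trans h)) (fun h => hxa (hxb.trans h))

variable [Fintype α]

/-- The rank of an element: the number of elements strictly below it in the trace. -/
noncomputable def uioRank (x : α) : ℕ :=
  (Finset.univ.filter (fun z => UTrace z x ∧ ¬ UTrace x z)).card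

lemma uioRank_lt {x y : α} (h1 : UTrace x y) (h2 : ¬ UTrace y x) :
    uioRank x < uioRank y := by
  apply Finset.card_lt_card
  rw [Finset.ssubset_iff_of_subset]
  · refine ⟨x, ?_, ?_⟩
    · simp only [Finset.mem_filter, Finset.mem_univ, true_and]
      exact ⟨h1, h2⟩
    · simp only [Finset.mem_filter, Finset.mem_univ, true_and, not_and, not_not]
      exact fun h => h
  · intro z hz
    simp only [Finset.mem_filter, Finset.mem_univ, true_and] at hz ⊢
    exact ⟨utrace_trans hz.1 h1, fun hyz => hz.2 (utrace_trans h1 hyz)⟩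

lemma utrace_of_rank_le (hno2 : ¬ HasTwoPlusTwo α) (hno3 : ¬ HasOnePlusThree α)
    {x y : α} (h : uioRank x ≤ uioRank y) : UTrace x y := by
  by_contra hc
  rcases utrace_total hno2 hno3 x y with h' | h'
  · exact hc h'
  · exact absurd h (not_le.mpr (uioRank_lt h' hc))

end UIO

theorem stmt_1 {α : Type*} [Fintype α] [PartialOrder α] :
    (∃ l : α → ℝ, ∀ x y : α, x < y ↔ l x + 1 < l y) ↔
      (¬ HasTwoPlusTwo α ∧ ¬ HasOnePlusThree α) := by
  constructor
  · rintro ⟨l, hl⟩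
    have nlt : ∀ x y : α, ¬ x < y → l y ≤ l x + 1 := fun x y h =>
      not_lt.mp (fun hc => h ((hl x y).mpr hc))
    constructor
    · rintro ⟨a, b, c, d, hab, hcd, _, had, hbc, _⟩
      have h1 := (hl a b).mp hab
      have h2 := (hl c d).mp hcd
      have h3 := nlt a d (fun h => had.1 h.le)
      have h4 := nlt c b (fun h => hbc.2 h.le)
      linarith
    · rintro ⟨a, b, d, c, hab, hbd, hca, _, hcd⟩
      have h1 := (hl a b).mp hab
      have h2 := (hl b d).mp hbd
      have h3 := nlt a c (fun h => hca.2 h.le)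
      have h4 := nlt c d (fun h => hcd.1 h.le)
      linarith
  · rintro ⟨hno2, hno3⟩
    have klt : ∀ x y : α, x < y → uioRank x < uioRank y := fun x y h =>
      uioRank_lt (utrace_of_lt h) (not_utrace_of_lt h)
    have k2 : ∀ x y z : α, x < y → uioRank y ≤ uioRank z → x < z := fun x y z h hle =>
      ((utrace_of_rank_le hno2 hno3 hle) x).1 h
    have k3 : ∀ x y z : α, uioRank z ≤ uioRank x → x < y → z < y := fun x y z hle h =>
      ((utrace_of_rank_le hno2 hno3 hle) y).2 h
    set Q : ℕ → ℕ → Prop :=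
      fun i j => ∃ x y : α, x < y ∧ uioRank x = i ∧ uioRank y = j with hQdef
    refine ⟨fun x => uioL Q (uioRank x), fun x y => ?_⟩
    constructor
    · intro h
      exact uioL_lower (klt x y h) ⟨x, y, h, rfl, rfl⟩
    · intro h
      by_contra hxy
      have hnQ : ¬ Q (uioRank x) (uioRank y) := by
        rintro ⟨x', y', h', hi, hj⟩
        exact hxy (k3 x' y x hi.ge (k2 x' y' y h' (le_of_eq hj)))
      have hup := uioL_upper (Q := Q) (fun i => ∃ z : α, uioRank z = i)
        (by
          rintro i j j' hq hle ⟨z, hz⟩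
          obtain ⟨u, v, huv, hu, hv⟩ := hq
          exact ⟨u, z, k2 u v z huv (by omega), hu, hz⟩)
        (by
          rintro i i' j hq hle ⟨z, hz⟩
          obtain ⟨u, v, huv, hu, hv⟩ := hq
          exact ⟨z, v, k3 u v z (by omega) huv, hz, hv⟩)
        ⟨x, rfl⟩ ⟨y, rfl⟩ hnQ
      exact absurd h (not_lt.mpr hup)
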